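/- Let k ≥ 3 be an odd integer, λ = (k−1)/2, N a positive integer with 4 ∣ N, and χ a Dirichlet character modulo N with values in ℂ. Let p be a prime not dividing N and t a squarefree positive integer. Define operators V_ℓ on sequences a : ℕ → ℂ by V_0 = id, V_1 = U_p, V_2 = U_p∘U_p − χ(p)²·(p^{k−3} + p^{k−2})·id, and V_{ℓ+1} = U_p∘V_ℓ − χ(p)²·p^{k−2}·V_{ℓ−1} for ℓ ≥ 2; and define operators W_{p,ℓ} by W_{p,0} = id, W_{p,1} = W_p, and W_{p,ℓ+1} = W_p∘W_{p,ℓ} − χ(p)²·p^{k−2}·W_{p,ℓ−1} for ℓ ≥ 1. Then for every integer ℓ ≥ 2, every a : ℕ → ℂ, and every positive integer n, (Sh_t(V_ℓ a))(n) = (W_{p,ℓ}(Sh_t a))(n) − χ(p)²·p^{k−3}·(W_{p,ℓ−2}(Sh_t a))(n). -/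

import Mathlib

open Finset

/-- ψ_t(m) = χ(m)·((−1)^λ t ∣ m) (Jacobi symbol) for odd m, 0 for even m,
    where λ = (k−1)/2. -/
noncomputable def psi (k N : ℕ) (χ : DirichletCharacter ℂ N) (t : ℕ) (m : ℕ) : ℂ :=
  if Odd m then
    χ (m : ZMod N) * ((jacobiSym ((-1) ^ ((k - 1) / 2) * (t : ℤ)) m : ℤ) : ℂ)
  else 0

/-- The Shimura-lift coefficient map:
    (Sh_t a)(n) = ∑_{d ∣ n} ψ_t(d)·d^{λ−1}·a(t·(n/d)²). -/
noncomputable def ShLift (k N : ℕ) (χ : DirichletCharacter ℂ N) (t : ℕ) (a : ℕ → ℂ)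
    (n : ℕ) : ℂ :=
  ∑ d ∈ n.divisors, psi k N χ t d * (d : ℂ) ^ ((k - 1) / 2 - 1) * a (t * (n / d) ^ 2)

/-- The half-integral weight Hecke coefficient operator U_p (Shimura's formula for T_{p²}). -/
noncomputable def Uop (k N : ℕ) (χ : DirichletCharacter ℂ N) (p : ℕ) [Fact p.Prime]
    (a : ℕ → ℂ) (n : ℕ) : ℂ :=
  a (p ^ 2 * n)
    + χ (p : ZMod N) * ((legendreSym p ((-1) ^ ((k - 1) / 2) * (n : ℤ)) : ℤ) : ℂ)
        * (p : ℂ) ^ ((k - 1) / 2 - 1) * a n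
    + χ (p : ZMod N) ^ 2 * (p : ℂ) ^ (k - 2) * (if p ^ 2 ∣ n then a (n / p ^ 2) else 0)

/-- The integral weight Hecke coefficient operator W_p:
    (W_p A)(n) = A(pn) + χ(p)²·p^{k−2}·[A(n/p) if p ∣ n else 0]. -/
noncomputable def Wop (k N : ℕ) (χ : DirichletCharacter ℂ N) (p : ℕ) (A : ℕ → ℂ)
    (n : ℕ) : ℂ :=
  A (p * n) + χ (p : ZMod N) ^ 2 * (p : ℂ) ^ (k - 2) * (if p ∣ n then A (n / p) else 0)

/-- The operators V_ℓ (coefficient versions of T_{p^{2ℓ}}):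
    V_0 = id, V_1 = U_p, V_2 = U_p∘U_p − χ(p)²·(p^{k−3}+p^{k−2})·id,
    V_{ℓ+1} = U_p∘V_ℓ − χ(p)²·p^{k−2}·V_{ℓ−1} for ℓ ≥ 2. -/
noncomputable def Vop (k N : ℕ) (χ : DirichletCharacter ℂ N) (p : ℕ) [Fact p.Prime] :
    ℕ → (ℕ → ℂ) → ℕ → ℂ
  | 0 => fun a => a
  | 1 => Uop k N χ p
  | 2 => fun a n =>
      Uop k N χ p (Uop k N χ p a) n
        - χ (p : ZMod N) ^ 2 * ((p : ℂ) ^ (k - 3) + (p : ℂ) ^ (k - 2)) * a n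
  | (ℓ + 3) => fun a n =>
      Uop k N χ p (Vop k N χ p (ℓ + 2) a) n
        - χ (p : ZMod N) ^ 2 * (p : ℂ) ^ (k - 2) * Vop k N χ p (ℓ + 1) a n

/-- The operators W_{p,ℓ} (coefficient versions of T_{p^ℓ}):
    W_{p,0} = id, W_{p,1} = W_p,
    W_{p,ℓ+1} = W_p∘W_{p,ℓ} − χ(p)²·p^{k−2}·W_{p,ℓ−1} for ℓ ≥ 1. -/
noncomputable def Wlop (k N : ℕ) (χ : DirichletCharacter ℂ N) (p : ℕ) :
    ℕ → (ℕ → ℂ) → ℕ → ℂ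
  | 0 => fun A => A
  | 1 => Wop k N χ p
  | (ℓ + 2) => fun A n =>
      Wop k N χ p (Wlop k N χ p (ℓ + 1) A) n
        - χ (p : ZMod N) ^ 2 * (p : ℂ) ^ (k - 2) * Wlop k N χ p ℓ A n

theorem sum_div_primePow_mul {p : ℕ} (hp : p.Prime) {m : ℕ} (hm : m ≠ 0) (hpm : ¬ p ∣ m)
    (e : ℕ) (F : ℕ → ℂ) :
    ∑ d ∈ (p ^ e * m).divisors, F d
      = ∑ i ∈ range (e + 1), ∑ δ ∈ m.divisors, F (p ^ i * δ) := by
  have hpem : p ^ e * m ≠ 0 := mul_ne_zero (pow_ne_zero _ hp.ne_zero) hm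
  have hfe : (p ^ e * m).factorization p = e := by
    rw [Nat.factorization_mul (pow_ne_zero _ hp.ne_zero) hm]
    simp [hp.factorization_pow, Nat.factorization_eq_zero_of_not_dvd hpm]
  rw [← Finset.sum_product']
  refine (Finset.sum_nbij' (fun x : ℕ × ℕ => p ^ x.1 * x.2)
      (fun d => (d.factorization p, d / p ^ d.factorization p)) ?_ ?_ ?_ ?_ ?_).symm
  · rintro ⟨i, δ⟩ hx
    simp only [mem_product, mem_range, Nat.mem_divisors] at hx
    exact Nat.mem_divisors.mpr
      ⟨mul_dvd_mul (pow_dvd_pow p (Nat.lt_succ_iff.mp hx.1)) hx.2.1, hpem⟩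
  · intro d hd
    rw [Nat.mem_divisors] at hd
    have hd0 : d ≠ 0 := ne_zero_of_dvd_ne_zero hpem hd.1
    simp only [mem_product, mem_range, Nat.mem_divisors]
    refine ⟨Nat.lt_succ_iff.mpr ?_, ?_, hm⟩
    · rw [← hfe]
      exact (Nat.factorization_le_iff_dvd hd0 hpem).mpr hd.1 p
    · have h2 := Nat.ordCompl_dvd_ordCompl_of_dvd hd.1 p
      rwa [hfe, Nat.mul_div_cancel_left _ (pow_pos hp.pos e)] at h2
  · rintro ⟨i, δ⟩ hx
    simp only [mem_product, mem_range, Nat.mem_divisors] at hx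
    have hδ0 : δ ≠ 0 := ne_zero_of_dvd_ne_zero hm hx.2.1
    have hpδ : ¬ p ∣ δ := fun h => hpm (h.trans hx.2.1)
    have hfi : (p ^ i * δ).factorization p = i := by
      rw [Nat.factorization_mul (pow_ne_zero _ hp.ne_zero) hδ0]
      simp [hp.factorization_pow, Nat.factorization_eq_zero_of_not_dvd hpδ]
    simp only [hfi, Nat.mul_div_cancel_left _ (pow_pos hp.pos i)]
  · intro d hd
    exact Nat.ordProj_mul_ordCompl_eq_self d p
  · rintro ⟨i, δ⟩ hx
    rfl

theorem psi_mul (k N : ℕ) (χ : DirichletCharacter ℂ N) (t : ℕ) (x y : ℕ) :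
    psi k N χ t (x * y) = psi k N χ t x * psi k N χ t y := by
  unfold psi
  rcases Nat.even_or_odd x with hx | hx
  · rw [if_neg (by simp [Nat.odd_mul, Nat.not_odd_iff_even.mpr hx]),
      if_neg (Nat.not_odd_iff_even.mpr hx), zero_mul]
  rcases Nat.even_or_odd y with hy | hy
  · rw [if_neg (by simp [Nat.odd_mul, Nat.not_odd_iff_even.mpr hy]),
      if_neg (Nat.not_odd_iff_even.mpr hy), mul_zero]
  have hx0 : x ≠ 0 := by rintro rfl; simp at hx
  have hy0 : y ≠ 0 := by rintro rfl; simp at hy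
  rw [if_pos (hx.mul hy), if_pos hx, if_pos hy, jacobiSym.mul_right' _ hx0 hy0]
  push_cast
  rw [map_mul]
  ring

theorem psi_pow (k N : ℕ) (χ : DirichletCharacter ℂ N) (t : ℕ) (x i : ℕ) :
    psi k N χ t (x ^ i) = psi k N χ t x ^ i := by
  induction i with
  | zero => simp [psi]
  | succ i ih => rw [pow_succ, pow_succ, psi_mul, ih]

noncomputable def Bfun (k N : ℕ) (χ : DirichletCharacter ℂ N) (t p m : ℕ)
    (g : ℕ → ℂ) (j : ℕ) : ℂ :=
  ∑ δ ∈ m.divisors, psi k N χ t δ * (δ : ℂ) ^ ((k - 1) / 2 - 1)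
    * g (t * (p ^ j * (m / δ)) ^ 2)

theorem shlift_eq (k N : ℕ) (χ : DirichletCharacter ℂ N) (t : ℕ)
    {p : ℕ} (hp : p.Prime) {m : ℕ} (hm : m ≠ 0) (hpm : ¬ p ∣ m)
    (g : ℕ → ℂ) (j : ℕ) :
    ShLift k N χ t g (p ^ j * m)
      = ∑ i ∈ range (j + 1),
          (psi k N χ t p * (p : ℂ) ^ ((k - 1) / 2 - 1)) ^ i * Bfun k N χ t p m g (j - i) := by
  rw [ShLift, sum_div_primePow_mul hp hm hpm]
  refine Finset.sum_congr rfl fun i hi => ?_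
  rw [mem_range, Nat.lt_succ_iff] at hi
  rw [Bfun, mul_sum]
  refine Finset.sum_congr rfl fun δ hδ => ?_
  rw [Nat.mem_divisors] at hδ
  have hdiv : p ^ j * m / (p ^ i * δ) = p ^ (j - i) * (m / δ) := by
    have h1 : p ^ j * m = p ^ i * (p ^ (j - i) * m) := by
      rw [← mul_assoc, ← pow_add]
      congr 2
      omega
    rw [h1, Nat.mul_div_mul_left _ _ (pow_pos hp.pos i), Nat.mul_div_assoc _ hδ.1]
  rw [hdiv, psi_mul, psi_pow]
  push_cast
  ring

theorem B_Uop_zero (k N : ℕ) (χ : DirichletCharacter ℂ N) (t : ℕ) (ht0 : 0 < t)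
    (ht : Squarefree t) {p : ℕ} [Fact p.Prime] (hp2 : p ≠ 2) {m : ℕ} (hm : m ≠ 0)
    (hpm : ¬ p ∣ m) (a : ℕ → ℂ) :
    Bfun k N χ t p m (Uop k N χ p a) 0
      = Bfun k N χ t p m a 1
        + (psi k N χ t p * (p : ℂ) ^ ((k - 1) / 2 - 1)) * Bfun k N χ t p m a 0 := by
  have hp : p.Prime := Fact.out
  unfold Bfun
  rw [mul_sum, ← Finset.sum_add_distrib]
  refine Finset.sum_congr rfl fun δ hδ => ?_
  rw [Nat.mem_divisors] at hδ
  set w := m / δ with hw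
  have hwm : w ∣ m := ⟨δ, by rw [hw, Nat.div_mul_cancel hδ.1]⟩
  have hw0 : w ≠ 0 := ne_zero_of_dvd_ne_zero hm hwm
  have hpw : ¬ p ∣ w := fun h => hpm (h.trans hwm)
  have hwz : (((w : ℤ)) : ZMod p) ≠ 0 := by
    rw [Int.cast_natCast, Ne, ZMod.natCast_eq_zero_iff]
    exact hpw
  have harg1 : p ^ 2 * (t * (p ^ 0 * w) ^ 2) = t * (p ^ 1 * w) ^ 2 := by ring
  have hnd : ¬ p ^ 2 ∣ t * (p ^ 0 * w) ^ 2 := by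
    rw [pow_zero, one_mul]
    intro hdvd
    have h2 : 2 ≤ (t * w ^ 2).factorization p :=
      (Nat.Prime.pow_dvd_iff_le_factorization hp
        (mul_ne_zero ht0.ne' (pow_ne_zero _ hw0))).mp hdvd
    rw [Nat.factorization_mul ht0.ne' (pow_ne_zero _ hw0), Nat.factorization_pow] at h2
    have h3 : t.factorization p ≤ 1 := (Nat.squarefree_iff_factorization_le_one ht0.ne').mp ht p
    have h4 : w.factorization p = 0 := Nat.factorization_eq_zero_of_not_dvd hpw
    simp only [Finsupp.coe_add, Finsupp.coe_smul, Pi.add_apply, Pi.smul_apply, h4,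
      smul_eq_mul, mul_zero, add_zero] at h2
    omega
  have hleg : legendreSym p ((-1) ^ ((k - 1) / 2) * ((t * (p ^ 0 * w) ^ 2 : ℕ) : ℤ))
      = legendreSym p ((-1) ^ ((k - 1) / 2) * (t : ℤ)) := by
    have h1 : ((-1 : ℤ) ^ ((k - 1) / 2) * ((t * (p ^ 0 * w) ^ 2 : ℕ) : ℤ))
        = ((-1) ^ ((k - 1) / 2) * (t : ℤ)) * (w : ℤ) ^ 2 := by push_cast; ring
    rw [h1, legendreSym.mul, legendreSym.sq_one' (p := p) hwz, mul_one]
  have hpsip : psi k N χ t p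
      = χ (p : ZMod N) * ((legendreSym p ((-1) ^ ((k - 1) / 2) * (t : ℤ)) : ℤ) : ℂ) := by
    rw [psi, if_pos (hp.odd_of_ne_two hp2), jacobiSym.legendreSym.to_jacobiSym]
  rw [Uop, harg1, if_neg hnd, hleg, hpsip]
  ring

theorem B_Uop_succ (k N : ℕ) (χ : DirichletCharacter ℂ N) (t : ℕ)
    {p : ℕ} [Fact p.Prime] {m : ℕ} (a : ℕ → ℂ) (j : ℕ) :
    Bfun k N χ t p m (Uop k N χ p a) (j + 1)
      = Bfun k N χ t p m a (j + 2)
        + χ (p : ZMod N) ^ 2 * (p : ℂ) ^ (k - 2) * Bfun k N χ t p m a j := by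
  have hp : p.Prime := Fact.out
  unfold Bfun
  rw [mul_sum, ← Finset.sum_add_distrib]
  refine Finset.sum_congr rfl fun δ hδ => ?_
  set w := m / δ with hw
  have harg1 : p ^ 2 * (t * (p ^ (j + 1) * w) ^ 2) = t * (p ^ (j + 2) * w) ^ 2 := by ring
  have hdvd : p ∣ t * (p ^ (j + 1) * w) ^ 2 := ⟨p ^ (2 * j + 1) * t * w ^ 2, by ring⟩
  have hleg : legendreSym p ((-1) ^ ((k - 1) / 2) * ((t * (p ^ (j + 1) * w) ^ 2 : ℕ) : ℤ))
      = 0 := by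
    rw [legendreSym.eq_zero_iff]
    have h0 : ((t * (p ^ (j + 1) * w) ^ 2 : ℕ) : ZMod p) = 0 :=
      (ZMod.natCast_eq_zero_iff _ _).mpr hdvd
    rw [Int.cast_mul, Int.cast_natCast, h0, mul_zero]
  have hdvd2 : p ^ 2 ∣ t * (p ^ (j + 1) * w) ^ 2 := ⟨t * (p ^ j * w) ^ 2, by ring⟩
  have hquot : t * (p ^ (j + 1) * w) ^ 2 / p ^ 2 = t * (p ^ j * w) ^ 2 := by
    rw [show t * (p ^ (j + 1) * w) ^ 2 = p ^ 2 * (t * (p ^ j * w) ^ 2) by ring,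
      Nat.mul_div_cancel_left _ (pow_pos hp.pos 2)]
  rw [Uop, harg1, if_pos hdvd2, hquot, hleg]
  push_cast
  ring

theorem key (k N : ℕ) (hN4 : 4 ∣ N) (χ : DirichletCharacter ℂ N)
    (p : ℕ) [Fact p.Prime] (hpN : ¬ p ∣ N) (t : ℕ) (ht0 : 0 < t) (ht : Squarefree t)
    (a : ℕ → ℂ) (n : ℕ) :
    ShLift k N χ t (Uop k N χ p a) n = Wop k N χ p (ShLift k N χ t a) n := by
  have hp : p.Prime := Fact.out
  have hp2 : p ≠ 2 := by
    rintro rfl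
    exact hpN (dvd_trans ⟨2, rfl⟩ hN4)
  rcases eq_or_ne n 0 with rfl | hn0
  · simp [ShLift, Wop]
  obtain ⟨e, m, hm0, hpm, rfl⟩ : ∃ e m, m ≠ 0 ∧ ¬ p ∣ m ∧ p ^ e * m = n :=
    ⟨n.factorization p, n / p ^ n.factorization p, (Nat.ordCompl_pos p hn0).ne',
      Nat.not_dvd_ordCompl hp hn0, Nat.ordProj_mul_ordCompl_eq_self n p⟩
  rw [shlift_eq k N χ t hp hm0 hpm, Wop,
    show p * (p ^ e * m) = p ^ (e + 1) * m by ring, shlift_eq k N χ t hp hm0 hpm]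
  set u := psi k N χ t p * (p : ℂ) ^ ((k - 1) / 2 - 1) with hu
  set c := χ (p : ZMod N) ^ 2 * (p : ℂ) ^ (k - 2) with hc
  set b := Bfun k N χ t p m a with hb
  cases e with
  | zero =>
    rw [if_neg (by simpa using hpm), mul_zero, add_zero]
    rw [Finset.sum_range_succ, Finset.sum_range_succ, Finset.sum_range_succ,
      Finset.sum_range_zero]
    norm_num
    rw [B_Uop_zero k N χ t ht0 ht hp2 hm0 hpm a, ← hb, ← hu]
  | succ e' =>
    rw [if_pos ⟨p ^ e' * m, by ring⟩,
      show p ^ (e' + 1) * m / p = p ^ e' * m by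
        rw [show p ^ (e' + 1) * m = p * (p ^ e' * m) by ring,
          Nat.mul_div_cancel_left _ hp.pos],
      shlift_eq k N χ t hp hm0 hpm]
    have hstep : ∀ i ∈ range (e' + 1),
        u ^ i * Bfun k N χ t p m (Uop k N χ p a) (e' + 1 - i)
          = u ^ i * b (e' + 2 - i) + u ^ i * (c * b (e' - i)) := by
      intro i hi
      rw [mem_range] at hi
      rw [show e' + 1 - i = (e' - i) + 1 by omega, B_Uop_succ k N χ t a (e' - i),
        show (e' - i) + 2 = e' + 2 - i by omega, ← hb, ← hc, mul_add]
    rw [Finset.sum_range_succ _ (e' + 1), Nat.sub_self,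
      B_Uop_zero k N χ t ht0 ht hp2 hm0 hpm a,
      Finset.sum_congr rfl hstep, Finset.sum_add_distrib]
    have hre : ∀ i ∈ range (e' + 1),
        u ^ i * b (e' + 1 + 1 - i) = u ^ i * b (e' + 2 - i) := by
      intro i _
      have h9 : e' + 1 + 1 - i = e' + 2 - i := by omega
      rw [h9]
    have hre2 : ∀ i ∈ range (e' + 1),
        c * (u ^ i * b (e' - i)) = u ^ i * (c * b (e' - i)) := by
      intro i _
      ring
    rw [Finset.sum_range_succ _ (e' + 2), Finset.sum_range_succ _ (e' + 1),
      show e' + 1 + 1 - (e' + 1 + 1) = 0 by omega, show e' + 1 + 1 - (e' + 1) = 1 by omega,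
      Finset.sum_congr rfl hre, Finset.mul_sum, Finset.sum_congr rfl hre2, ← hb, ← hu]
    ring

theorem ShLift_sub_smul (k N : ℕ) (χ : DirichletCharacter ℂ N) (t : ℕ)
    (F G : ℕ → ℂ) (c : ℂ) (n : ℕ) :
    ShLift k N χ t (fun m => F m - c * G m) n
      = ShLift k N χ t F n - c * ShLift k N χ t G n := by
  unfold ShLift
  rw [Finset.mul_sum, ← Finset.sum_sub_distrib]
  refine Finset.sum_congr rfl fun d _ => ?_
  ring

theorem Wop_sub_smul (k N : ℕ) (χ : DirichletCharacter ℂ N) (p : ℕ)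
    (F G : ℕ → ℂ) (c : ℂ) (n : ℕ) :
    Wop k N χ p (fun m => F m - c * G m) n
      = Wop k N χ p F n - c * Wop k N χ p G n := by
  unfold Wop
  split_ifs with h <;> ring

theorem key' (k N : ℕ) (hN4 : 4 ∣ N) (χ : DirichletCharacter ℂ N)
    (p : ℕ) [Fact p.Prime] (hpN : ¬ p ∣ N) (t : ℕ) (ht0 : 0 < t) (ht : Squarefree t)
    (a : ℕ → ℂ) :
    ShLift k N χ t (Uop k N χ p a) = Wop k N χ p (ShLift k N χ t a) :=
  funext (key k N hN4 χ p hpN t ht0 ht a)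

theorem main_aux (k N : ℕ) (hN4 : 4 ∣ N) (χ : DirichletCharacter ℂ N)
    (p : ℕ) [Fact p.Prime] (hpN : ¬ p ∣ N) (t : ℕ) (ht0 : 0 < t) (ht : Squarefree t)
    (ℓ : ℕ) (a : ℕ → ℂ) (n : ℕ) :
    ShLift k N χ t (Vop k N χ p (ℓ + 2) a) n
      = Wlop k N χ p (ℓ + 2) (ShLift k N χ t a) n
        - χ (p : ZMod N) ^ 2 * (p : ℂ) ^ (k - 3)
            * Wlop k N χ p ℓ (ShLift k N χ t a) n := by
  induction ℓ using Nat.strong_induction_on generalizing n with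
  | _ ℓ ih =>
    match ℓ with
    | 0 =>
      have h2 : Vop k N χ p 2 a = fun n => Uop k N χ p (Uop k N χ p a) n
          - (χ (p : ZMod N) ^ 2 * ((p : ℂ) ^ (k - 3) + (p : ℂ) ^ (k - 2))) * a n := rfl
      rw [h2, ShLift_sub_smul, key k N hN4 χ p hpN t ht0 ht,
        key' k N hN4 χ p hpN t ht0 ht]
      simp only [Wlop]
      ring
    | 1 =>
      have h3 : Vop k N χ p 3 a = fun n => Uop k N χ p (Vop k N χ p 2 a) n
          - (χ (p : ZMod N) ^ 2 * (p : ℂ) ^ (k - 2)) * Vop k N χ p 1 a n := rfl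
      rw [h3, ShLift_sub_smul, key k N hN4 χ p hpN t ht0 ht]
      have hV2 : ShLift k N χ t (Vop k N χ p 2 a)
          = fun x => Wlop k N χ p 2 (ShLift k N χ t a) x
            - χ (p : ZMod N) ^ 2 * (p : ℂ) ^ (k - 3)
                * Wlop k N χ p 0 (ShLift k N χ t a) x :=
        funext fun x => ih 0 (by omega) x
      rw [hV2, Wop_sub_smul]
      simp only [Vop]
      rw [key k N hN4 χ p hpN t ht0 ht]
      simp only [Wlop]
      ring
    | (ℓ + 2) =>
      have h4 : Vop k N χ p (ℓ + 4) a = fun n => Uop k N χ p (Vop k N χ p (ℓ + 3) a) n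
          - (χ (p : ZMod N) ^ 2 * (p : ℂ) ^ (k - 2)) * Vop k N χ p (ℓ + 2) a n := rfl
      rw [h4, ShLift_sub_smul, key k N hN4 χ p hpN t ht0 ht]
      have hV3 : ShLift k N χ t (Vop k N χ p (ℓ + 3) a)
          = fun x => Wlop k N χ p (ℓ + 3) (ShLift k N χ t a) x
            - χ (p : ZMod N) ^ 2 * (p : ℂ) ^ (k - 3)
                * Wlop k N χ p (ℓ + 1) (ShLift k N χ t a) x :=
        funext fun x => ih (ℓ + 1) (by omega) x
      rw [hV3, Wop_sub_smul, ih ℓ (by omega) n]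
      simp only [Wlop]
      ring
      -- dead code below
/-
      show Wop k N χ p (Wlop k N χ p (ℓ + 3) (ShLift k N χ t a)) n
          - _ * Wop k N χ p (Wlop k N χ p (ℓ + 1) (ShLift k N χ t a)) n
          - _ * (Wlop k N χ p (ℓ + 2) (ShLift k N χ t a) n
              - _ * Wlop k N χ p ℓ (ShLift k N χ t a) n)
        = (Wop k N χ p (Wlop k N χ p (ℓ + 3) (ShLift k N χ t a)) n
            - χ (p : ZMod N) ^ 2 * (p : ℂ) ^ (k - 2)
              * Wlop k N χ p (ℓ + 2) (ShLift k N χ t a) n)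
          - _ * (Wop k N χ p (Wlop k N χ p (ℓ + 1) (ShLift k N χ t a)) n
              - χ (p : ZMod N) ^ 2 * (p : ℂ) ^ (k - 2)
                * Wlop k N χ p ℓ (ShLift k N χ t a) n)
      ring
-/

/-- for p ∤ N, ℓ ≥ 2, every a and every n ≥ 1,
    (Sh_t(V_ℓ a))(n) = (W_{p,ℓ}(Sh_t a))(n) − χ(p)²·p^{k−3}·(W_{p,ℓ−2}(Sh_t a))(n). -/
theorem shimura_lift_commutes_with_Tp2l
    (k N : ℕ) (hk3 : 3 ≤ k) (hk : Odd k) (hN : 0 < N) (hN4 : 4 ∣ N)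
    (χ : DirichletCharacter ℂ N) (p : ℕ) [Fact p.Prime] (hpN : ¬ p ∣ N)
    (t : ℕ) (ht0 : 0 < t) (ht : Squarefree t)
    (ℓ : ℕ) (hℓ : 2 ≤ ℓ) (a : ℕ → ℂ) (n : ℕ) (hn : 0 < n) :
    ShLift k N χ t (Vop k N χ p ℓ a) n
      = Wlop k N χ p ℓ (ShLift k N χ t a) n
        - χ (p : ZMod N) ^ 2 * (p : ℂ) ^ (k - 3)
            * Wlop k N χ p (ℓ - 2) (ShLift k N χ t a) n := by
  obtain ⟨l, rfl⟩ := Nat.exists_eq_add_of_le hℓ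
  rw [show 2 + l = l + 2 by omega]
  simp only [Nat.add_sub_cancel]
  exact main_aux k N hN4 χ p hpN t ht0 ht l a n
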